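/- Let p, q, a, b : Fin 3 → ℤ (indices 1,2,3) satisfy p 1 + p 2 + p 3 = q 1 + q 2 + q 3 and a 1 + a 2 + a 3 = b 1 + b 2 + b 3. Assume N σ ≠ 0 for every permutation σ of {1,2,3}, and that for some i ≠ j the closed segment between Q i and Q j in ℝ² is disjoint from the convex hull of {P 1, P 2, P 3}. Then there exists a matrix A ∈ GL(2, ℤ) such that, writing (p′ i, a′ i) := A·(p i, a i) and (q′ i, b′ i) := A·(q i, b i), one has: (a) two of the integers p′ 1, p′ 2, p′ 3 coincide or two of the integers q′ 1, q′ 2, q′ 3 coincide, and (b) for every i, q′ i does not lie in the closed interval [min(p′ 1, p′ 2, p′ 3), max(p′ 1, p′ 2, p′ 3)]. (Paper: Theorem 3.7 — every positively curved Eschenburg 6-orbifold is equivalent to one fibering over a positively curved cohomogeneity-two Eschenburg 7-orbifold.) -/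

import Mathlib

/-- planar cross product -/
def rcross (z w : ℝ × ℝ) : ℝ := z.1 * w.2 - z.2 * w.1
/-- planar dot product -/
def rdot (z w : ℝ × ℝ) : ℝ := z.1 * w.1 + z.2 * w.2
/-- angular key of `z` relative to base direction `u` -/
noncomputable def rkey (u z : ℝ × ℝ) : ℝ := rcross u z / rdot u z

lemma rcross_id (u z z' : ℝ × ℝ) :
    (u.1 ^ 2 + u.2 ^ 2) * rcross z z' = rdot u z * rcross u z' - rdot u z' * rcross u z := by
  simp only [rcross, rdot]; ring

lemma usq_pos {u z : ℝ × ℝ} (hz : 0 < rdot u z) : 0 < u.1 ^ 2 + u.2 ^ 2 := by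
  rcases eq_or_ne u.1 0 with h1 | h1
  · rcases eq_or_ne u.2 0 with h2 | h2
    · exfalso; simp [rdot, h1, h2] at hz
    · positivity
  · positivity

lemma key_le_iff {u z z' : ℝ × ℝ} (hz : 0 < rdot u z) (hz' : 0 < rdot u z') :
    rkey u z ≤ rkey u z' ↔ 0 ≤ rcross z z' := by
  have hu := usq_pos hz
  have hid := rcross_id u z z'
  rw [rkey, rkey, div_le_div_iff₀ hz hz']
  constructor
  · intro h; nlinarith
  · intro h; nlinarith

lemma key_lt_iff {u z z' : ℝ × ℝ} (hz : 0 < rdot u z) (hz' : 0 < rdot u z') :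
    rkey u z < rkey u z' ↔ 0 < rcross z z' := by
  have hu := usq_pos hz
  have hid := rcross_id u z z'
  rw [rkey, rkey, div_lt_div_iff₀ hz hz']
  constructor
  · intro h; nlinarith
  · intro h; nlinarith

/-- Cramer-type identity, first components. -/
lemma cramer1 (a b c : ℝ × ℝ) :
    rcross a b * c.1 = rcross c b * a.1 + rcross a c * b.1 := by
  simp only [rcross]; ring

lemma cramer2 (a b c : ℝ × ℝ) :
    rcross a b * c.2 = rcross c b * a.2 + rcross a c * b.2 := by
  simp only [rcross]; ring

lemma fin2_pair : ∀ x y : Fin 2, x ≠ y → (x = 0 ∧ y = 1) ∨ (x = 1 ∧ y = 0) := by decide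

/-- The contradiction at the heart of the mixed case of the separating axis theorem. -/
lemma mixed_core (vlo vhi x y z1 z2 : ℝ × ℝ)
    (hxy : x + y = vlo + vhi)
    (hK : 0 < rcross vlo vhi)
    (hax : 0 ≤ rcross x vhi) (hbx : 0 ≤ rcross vlo x)
    (hay : 0 ≤ rcross y vhi) (hby : 0 ≤ rcross vlo y)
    (ha1 : 0 ≤ rcross z1 vhi) (hb1 : 0 ≤ rcross vlo z1)
    (ha2 : 0 ≤ rcross z2 vhi) (hb2 : 0 ≤ rcross vlo z2)
    (hpx : 0 < rcross x vhi + rcross vlo x)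
    (hpy : 0 < rcross y vhi + rcross vlo y)
    (hp1 : 0 < rcross z1 vhi + rcross vlo z1)
    (hp2 : 0 < rcross z2 vhi + rcross vlo z2)
    (h1 : 0 ≤ rcross (x - vlo) z1) (h2 : 0 ≤ rcross (y - vlo) z2) : False := by
  have e1 : x.1 + y.1 = vlo.1 + vhi.1 := congrArg Prod.fst hxy
  have e2 : x.2 + y.2 = vlo.2 + vhi.2 := congrArg Prod.snd hxy
  have hsum1 : rcross x vhi + rcross y vhi = rcross vlo vhi := by
    simp only [rcross]; linear_combination vhi.2 * e1 - vhi.1 * e2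
  have hsum2 : rcross vlo x + rcross vlo y = rcross vlo vhi := by
    simp only [rcross]; linear_combination vlo.1 * e2 - vlo.2 * e1
  have hC : rcross vlo vhi * rcross (x - vlo) z1 =
      -(rcross y vhi * rcross vlo z1 + rcross vlo x * rcross z1 vhi) := by
    simp only [rcross, Prod.fst_sub, Prod.snd_sub] at hsum1 ⊢
    linear_combination (vlo.1 * z1.2 - vlo.2 * z1.1) * hsum1
  have hD : rcross vlo vhi * rcross (y - vlo) z2 =
      -(rcross x vhi * rcross vlo z2 + rcross vlo y * rcross z2 vhi) := by
    simp only [rcross, Prod.fst_sub, Prod.snd_sub] at hsum1 ⊢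
    linear_combination (vlo.1 * z2.2 - vlo.2 * z2.1) * hsum1
  have hz1 : rcross y vhi * rcross vlo z1 = 0 ∧ rcross vlo x * rcross z1 vhi = 0 := by
    have hCpos : 0 ≤ rcross vlo vhi * rcross (x - vlo) z1 := mul_nonneg hK.le h1
    constructor <;> linarith [mul_nonneg hay hb1, mul_nonneg hbx ha1]
  have hz2 : rcross x vhi * rcross vlo z2 = 0 ∧ rcross vlo y * rcross z2 vhi = 0 := by
    have hDpos : 0 ≤ rcross vlo vhi * rcross (y - vlo) z2 := mul_nonneg hK.le h2
    constructor <;> linarith [mul_nonneg hax hb2, mul_nonneg hby ha2]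
  rcases mul_eq_zero.mp hz1.1 with hA1 | hA1 <;>
  rcases mul_eq_zero.mp hz1.2 with hA2 | hA2 <;>
  rcases mul_eq_zero.mp hz2.1 with hB1 | hB1 <;>
  rcases mul_eq_zero.mp hz2.2 with hB2 | hB2 <;>
  linarith

/-- Separating axis theorem core: if six vectors `A m + B t` all lie in an open half plane
and two of them span, then some difference `A m - A n` or `B 0 - B 1` gives a direction
whose line strictly separates. -/
lemma sat_core (A : Fin 3 → ℝ × ℝ) (B : Fin 2 → ℝ × ℝ) (u : ℝ × ℝ)
    (hpos : ∀ m t, 0 < rdot u (A m + B t))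
    (hN : rcross (A 0 + B 0) (A 1 + B 1) ≠ 0) :
    ∃ w : ℝ × ℝ,
      (∀ m t, rcross w (A m + B t) < 0) ∧
      ((∃ m n : Fin 3, m ≠ n ∧ w = A m - A n) ∨ w = B 0 - B 1 ∨ w = B 1 - B 0) := by
  obtain ⟨lo, -, hlo⟩ := Finset.exists_min_image Finset.univ
      (fun r : Fin 3 × Fin 2 => rkey u (A r.1 + B r.2)) ⟨(0, 0), Finset.mem_univ _⟩
  obtain ⟨hi, -, hhi⟩ := Finset.exists_max_image Finset.univ
      (fun r : Fin 3 × Fin 2 => rkey u (A r.1 + B r.2)) ⟨(0, 0), Finset.mem_univ _⟩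
  set vlo := A lo.1 + B lo.2 with hvlo
  set vhi := A hi.1 + B hi.2 with hvhi
  have hklo : ∀ m t, rkey u vlo ≤ rkey u (A m + B t) := fun m t => hlo (m, t) (Finset.mem_univ _)
  have hkhi : ∀ m t, rkey u (A m + B t) ≤ rkey u vhi := fun m t => hhi (m, t) (Finset.mem_univ _)
  have hne : rkey u (A 0 + B 0) ≠ rkey u (A 1 + B 1) := by
    intro he
    apply hN
    have h1 := (key_le_iff (hpos 0 0) (hpos 1 1)).mp he.le
    have h2 := (key_le_iff (hpos 1 1) (hpos 0 0)).mp he.ge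
    have h3 : rcross (A 1 + B 1) (A 0 + B 0) = -rcross (A 0 + B 0) (A 1 + B 1) := by
      simp only [rcross]; ring
    rw [h3] at h2; linarith
  have hK : 0 < rcross vlo vhi := by
    rw [← key_lt_iff (hpos lo.1 lo.2) (hpos hi.1 hi.2)]
    rcases hne.lt_or_gt with h | h
    · exact lt_of_le_of_lt (hklo 0 0) (lt_of_lt_of_le h (hkhi 1 1))
    · exact lt_of_le_of_lt (hklo 1 1) (lt_of_lt_of_le h (hkhi 0 0))
  have hα : ∀ m t, 0 ≤ rcross (A m + B t) vhi :=
    fun m t => (key_le_iff (hpos m t) (hpos hi.1 hi.2)).mp (hkhi m t)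
  have hβ : ∀ m t, 0 ≤ rcross vlo (A m + B t) :=
    fun m t => (key_le_iff (hpos lo.1 lo.2) (hpos m t)).mp (hklo m t)
  have hαβ : ∀ m t, 0 < rcross (A m + B t) vhi + rcross vlo (A m + B t) := by
    intro m t
    rcases (add_nonneg (hα m t) (hβ m t)).lt_or_eq with h | h
    · exact h
    · exfalso
      have ha : rcross (A m + B t) vhi = 0 := by nlinarith [hα m t, hβ m t]
      have hb : rcross vlo (A m + B t) = 0 := by nlinarith [hα m t, hβ m t]
      have h1 := cramer1 vlo vhi (A m + B t)
      have h2 := cramer2 vlo vhi (A m + B t)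
      rw [ha, hb] at h1 h2
      have hz1 : (A m + B t).1 = 0 := by nlinarith [hK]
      have hz2 : (A m + B t).2 = 0 := by nlinarith [hK]
      have hp := hpos m t
      rw [rdot, hz1, hz2] at hp
      simp at hp
  have hsep : ∀ m t, rcross (vhi - vlo) (A m + B t) < 0 := by
    intro m t
    have hb2 : rcross (vhi - vlo) (A m + B t) =
        -(rcross (A m + B t) vhi + rcross vlo (A m + B t)) := by
      simp only [rcross, Prod.fst_sub, Prod.snd_sub]; ring
    rw [hb2]; linarith [hαβ m t]
  by_cases htB : lo.2 = hi.2
  · have hmn : hi.1 ≠ lo.1 := by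
      intro h
      rw [hvlo, hvhi, htB, h] at hK
      have h0 : rcross (A lo.1 + B hi.2) (A lo.1 + B hi.2) = 0 := by
        simp only [rcross]; ring
      rw [h0] at hK
      exact lt_irrefl _ hK
    refine ⟨vhi - vlo, hsep, Or.inl ⟨hi.1, lo.1, hmn, ?_⟩⟩
    rw [hvhi, hvlo, htB]; abel
  · by_cases htA : lo.1 = hi.1
    · have hw : vhi - vlo = B hi.2 - B lo.2 := by rw [hvhi, hvlo, htA]; abel
      refine ⟨vhi - vlo, hsep, Or.inr ?_⟩
      rcases fin2_pair lo.2 hi.2 htB with ⟨h3, h4⟩ | ⟨h3, h4⟩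
      · right; rw [hw, h3, h4]
      · left; rw [hw, h3, h4]
    · -- mixed case
      have hxy : (A lo.1 + B hi.2) + (A hi.1 + B lo.2) = vlo + vhi := by
        rw [hvlo, hvhi]; abel
      have hxw : (A lo.1 + B hi.2) - vlo = B hi.2 - B lo.2 := by rw [hvlo]; abel
      have hyw : (A hi.1 + B lo.2) - vlo = A hi.1 - A lo.1 := by rw [hvlo]; abel
      by_cases hc : ∀ m t, rcross ((A lo.1 + B hi.2) - vlo) (A m + B t) < 0
      · refine ⟨(A lo.1 + B hi.2) - vlo, hc, Or.inr ?_⟩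
        rcases fin2_pair lo.2 hi.2 htB with ⟨h3, h4⟩ | ⟨h3, h4⟩
        · right; rw [hxw, h3, h4]
        · left; rw [hxw, h3, h4]
      · push_neg at hc
        obtain ⟨m1, t1, h1⟩ := hc
        refine ⟨(A hi.1 + B lo.2) - vlo, ?_, Or.inl ⟨hi.1, lo.1, fun h => htA h.symm, hyw⟩⟩
        intro m t
        by_contra h2
        push_neg at h2
        exact mixed_core vlo vhi (A lo.1 + B hi.2) (A hi.1 + B lo.2)
          (A m1 + B t1) (A m + B t) hxy hK
          (hα lo.1 hi.2) (hβ lo.1 hi.2) (hα hi.1 lo.2) (hβ hi.1 lo.2)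
          (hα m1 t1) (hβ m1 t1) (hα m t) (hβ m t)
          (hαβ lo.1 hi.2) (hαβ hi.1 lo.2) (hαβ m1 t1) (hαβ m t) h1 h2

/-- The planar point associated to a pair of integer Eschenburg parameters,
e.g. `P i = (p i, a i)` and `Q i = (q i, b i)` in `ℝ²`. -/
noncomputable def eschPt (x y : ℤ) : EuclideanSpace ℝ (Fin 2) := WithLp.toLp 2 ![(x : ℝ), (y : ℝ)]

/-- The signed order `N σ` of the isotropy group at the vertex `∗_σ` of the Eschenburg
orbifold `O^{a,b}_{p,q}`. -/
def eschN (p q a b : Fin 3 → ℤ) (σ : Equiv.Perm (Fin 3)) : ℤ :=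
  (p 0 - q (σ 0)) * (a 1 - b (σ 1)) - (p 1 - q (σ 1)) * (a 0 - b (σ 0))

lemma outside_lemma (X0 X1 X2 s t u : ℤ) (hsum : s + t + u = X0 + X1 + X2)
    (h0 : X0 < s) (h1 : X1 < s) (h2 : X2 < s) (h0' : X0 < t) (h1' : X1 < t) (h2' : X2 < t) :
    (¬(min X0 (min X1 X2) ≤ s ∧ s ≤ max X0 (max X1 X2))) ∧
    (¬(min X0 (min X1 X2) ≤ t ∧ t ≤ max X0 (max X1 X2))) ∧
    (¬(min X0 (min X1 X2) ≤ u ∧ u ≤ max X0 (max X1 X2))) := by omega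

lemma f_esch (f : EuclideanSpace ℝ (Fin 2) →L[ℝ] ℝ) (x y : ℤ) :
    f (eschPt x y) = x * f (eschPt 1 0) + y * f (eschPt 0 1) := by
  have h : eschPt x y = (x : ℝ) • eschPt 1 0 + (y : ℝ) • eschPt 0 1 := by
    ext t
    fin_cases t <;> simp [eschPt]
  rw [h, map_add, map_smul, map_smul, smul_eq_mul, smul_eq_mul]

lemma exists_perm_01 : ∀ i j : Fin 3, i ≠ j → ∃ σ : Equiv.Perm (Fin 3), σ 0 = i ∧ σ 1 = j := by
  decide

/-- **(Theorem 3.7.)** Every positively curved Eschenburg `6`-orbifold is equivalent, via a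
`GL(2, ℤ)` change of parameters, to one fibering over a positively curved
cohomogeneity-two Eschenburg `7`-orbifold: two of the new `p′`-entries or two of the new
`q′`-entries coincide, and no `q′ i` lies in `[min p′, max p′]`. -/
theorem positively_curved_fibers_over_cohomogeneity_two
    (p q a b : Fin 3 → ℤ)
    (hpq : p 0 + p 1 + p 2 = q 0 + q 1 + q 2)
    (hab : a 0 + a 1 + a 2 = b 0 + b 1 + b 2)
    (hfree : ∀ σ : Equiv.Perm (Fin 3), eschN p q a b σ ≠ 0)
    (hpos : ∃ i j : Fin 3, i ≠ j ∧
      Disjoint (segment ℝ (eschPt (q i) (b i)) (eschPt (q j) (b j)))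
        (convexHull ℝ (Set.range fun i => eschPt (p i) (a i)))) :
    ∃ A : Matrix (Fin 2) (Fin 2) ℤ, IsUnit A.det ∧
      (let p' : Fin 3 → ℤ := fun i => A 0 0 * p i + A 0 1 * a i
       let a' : Fin 3 → ℤ := fun i => A 1 0 * p i + A 1 1 * a i
       let q' : Fin 3 → ℤ := fun i => A 0 0 * q i + A 0 1 * b i
       let b' : Fin 3 → ℤ := fun i => A 1 0 * q i + A 1 1 * b i
       ((∃ i j : Fin 3, i ≠ j ∧ p' i = p' j) ∨ (∃ i j : Fin 3, i ≠ j ∧ q' i = q' j)) ∧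
         ∀ i : Fin 3, q' i ∉
           Set.Icc (min (p' 0) (min (p' 1) (p' 2))) (max (p' 0) (max (p' 1) (p' 2)))) := by
  obtain ⟨i, j, hij, hd⟩ := hpos
  -- separating functional
  have hcs : IsCompact (segment ℝ (eschPt (q i) (b i)) (eschPt (q j) (b j))) := by
    rw [← convexHull_pair]
    exact (Set.toFinite _).isCompact_convexHull ℝ
  have hct : IsClosed (convexHull ℝ (Set.range fun i => eschPt (p i) (a i))) :=
    ((Set.finite_range _).isCompact_convexHull ℝ).isClosed
  obtain ⟨f, c, d, hseg, hcd, hhull⟩ := geometric_hahn_banach_compact_closed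
    (convex_segment _ _) hcs (convex_convexHull _ _) hct hd
  set u₀ : ℝ × ℝ := (f (eschPt 1 0), f (eschPt 0 1)) with hu₀
  set Av : Fin 3 → ℝ × ℝ := fun m => ((p m : ℝ), (a m : ℝ)) with hAv
  set idx : Fin 2 → Fin 3 := ![i, j] with hidx
  set Bv : Fin 2 → ℝ × ℝ := fun t => (-(q (idx t) : ℝ), -(b (idx t) : ℝ)) with hBv
  have hQmem : ∀ t : Fin 2, eschPt (q (idx t)) (b (idx t)) ∈
      segment ℝ (eschPt (q i) (b i)) (eschPt (q j) (b j)) := by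
    intro t
    fin_cases t
    · simpa [hidx] using left_mem_segment ℝ (eschPt (q i) (b i)) (eschPt (q j) (b j))
    · simpa [hidx] using right_mem_segment ℝ (eschPt (q i) (b i)) (eschPt (q j) (b j))
  have hpos' : ∀ m t, 0 < rdot u₀ (Av m + Bv t) := by
    intro m t
    have hq : f (eschPt (q (idx t)) (b (idx t))) < c := hseg _ (hQmem t)
    have hp : d < f (eschPt (p m) (a m)) :=
      hhull _ (subset_convexHull ℝ _ ⟨m, rfl⟩)
    have e1 := f_esch f (p m) (a m)
    have e2 := f_esch f (q (idx t)) (b (idx t))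
    have hval : rdot u₀ (Av m + Bv t)
        = f (eschPt (p m) (a m)) - f (eschPt (q (idx t)) (b (idx t))) := by
      rw [e1, e2]
      simp only [rdot, hAv, hBv, hu₀, Prod.fst_add, Prod.snd_add]
      ring
    rw [hval]; linarith
  have hN' : rcross (Av 0 + Bv 0) (Av 1 + Bv 1) ≠ 0 := by
    obtain ⟨σ, hσ0, hσ1⟩ := exists_perm_01 i j hij
    have hNe := hfree σ
    have hcast : rcross (Av 0 + Bv 0) (Av 1 + Bv 1) = ((eschN p q a b σ : ℤ) : ℝ) := by
      simp only [rcross, hAv, hBv, hidx, Prod.fst_add, Prod.snd_add, eschN, hσ0, hσ1,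
        Matrix.cons_val_zero, Matrix.cons_val_one, Matrix.head_cons]
      push_cast
      ring
    rw [hcast]
    exact_mod_cast hNe
  obtain ⟨w, hw, hcase⟩ := sat_core Av Bv u₀ hpos' hN'
  -- extract an integer vector
  obtain ⟨W, hWcast, htwo⟩ : ∃ W : ℤ × ℤ,
      (w = ((W.1 : ℝ), (W.2 : ℝ))) ∧
      ((∃ m n : Fin 3, m ≠ n ∧ W.1 * (a m - a n) - W.2 * (p m - p n) = 0) ∨
        (W.1 * (b i - b j) - W.2 * (q i - q j) = 0)) := by
    rcases hcase with ⟨m, n, hmn, hwe⟩ | hwe | hwe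
    · refine ⟨(p m - p n, a m - a n), ?_, Or.inl ⟨m, n, hmn, by ring⟩⟩
      rw [hwe]
      simp only [hAv, Prod.mk_sub_mk, Prod.mk.injEq]
      constructor <;> (push_cast; ring)
    · refine ⟨(q j - q i, b j - b i), ?_, Or.inr (by ring)⟩
      rw [hwe]
      simp only [hBv, hidx, Matrix.cons_val_zero, Matrix.cons_val_one, Matrix.head_cons,
        Prod.mk_sub_mk, Prod.mk.injEq]
      constructor <;> (push_cast; ring)
    · refine ⟨(q i - q j, b i - b j), ?_, Or.inr (by ring)⟩
      rw [hwe]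
      simp only [hBv, hidx, Matrix.cons_val_zero, Matrix.cons_val_one, Matrix.head_cons,
        Prod.mk_sub_mk, Prod.mk.injEq]
      constructor <;> (push_cast; ring)
  -- integer separation inequalities
  have hsepInt : ∀ (m : Fin 3) (t : Fin 2),
      W.1 * (a m - b (idx t)) - W.2 * (p m - q (idx t)) < 0 := by
    intro m t
    have hwmt := hw m t
    rw [hWcast] at hwmt
    simp only [rcross, hAv, hBv, Prod.fst_add, Prod.snd_add] at hwmt
    have : ((W.1 * (a m - b (idx t)) - W.2 * (p m - q (idx t)) : ℤ) : ℝ) < 0 := by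
      push_cast
      linarith
    exact_mod_cast this
  set U : ℤ := -W.2 with hU
  set V : ℤ := W.1 with hV
  have hIi : ∀ m : Fin 3, U * p m + V * a m < U * q i + V * b i := by
    intro m
    have := hsepInt m 0
    simp only [hidx, Matrix.cons_val_zero] at this
    rw [hU, hV]; linarith
  have hIj : ∀ m : Fin 3, U * p m + V * a m < U * q j + V * b j := by
    intro m
    have := hsepInt m 1
    simp only [hidx, Matrix.cons_val_one, Matrix.head_cons, Matrix.cons_val_zero] at this
    rw [hU, hV]; linarith
  -- gcd normalization
  have hg : 0 < (Int.gcd U V : ℤ) := by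
    rcases Nat.eq_zero_or_pos (Int.gcd U V) with h | h
    · exfalso
      obtain ⟨hU0, hV0⟩ := Int.gcd_eq_zero_iff.mp h
      have := hIi 0
      rw [hU0, hV0] at this
      simp at this
    · exact_mod_cast h
  set g : ℤ := (Int.gcd U V : ℤ) with hgdef
  set U' : ℤ := U / g with hU'
  set V' : ℤ := V / g with hV'
  have hUfac : U = g * U' := (Int.mul_ediv_cancel' (Int.gcd_dvd_left _ _)).symm
  have hVfac : V = g * V' := (Int.mul_ediv_cancel' (Int.gcd_dvd_right _ _)).symm
  have hIi' : ∀ m : Fin 3, U' * p m + V' * a m < U' * q i + V' * b i := by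
    intro m
    have h2 := hIi m
    rw [hUfac, hVfac] at h2
    have h3 : g * (U' * p m + V' * a m) < g * (U' * q i + V' * b i) := by ring_nf; ring_nf at h2; linarith
    exact lt_of_mul_lt_mul_left h3 (by linarith)
  have hIj' : ∀ m : Fin 3, U' * p m + V' * a m < U' * q j + V' * b j := by
    intro m
    have h2 := hIj m
    rw [hUfac, hVfac] at h2
    have h3 : g * (U' * p m + V' * a m) < g * (U' * q j + V' * b j) := by ring_nf; ring_nf at h2; linarith
    exact lt_of_mul_lt_mul_left h3 (by linarith)
  have htwo' : (∃ m n : Fin 3, m ≠ n ∧ U' * p m + V' * a m = U' * p n + V' * a n) ∨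
      (U' * q i + V' * b i = U' * q j + V' * b j) := by
    rcases htwo with ⟨m, n, hmn, heq⟩ | heq
    · refine Or.inl ⟨m, n, hmn, ?_⟩
      have h2 : U * p m + V * a m = U * p n + V * a n := by
        rw [hU, hV]; linear_combination heq
      rw [hUfac, hVfac] at h2
      have h3 : g * (U' * p m + V' * a m) = g * (U' * p n + V' * a n) := by
        ring_nf; ring_nf at h2; linarith
      exact mul_left_cancel₀ (by linarith) h3
    · refine Or.inr ?_
      have h2 : U * q i + V * b i = U * q j + V * b j := by
        rw [hU, hV]; linear_combination heq
      rw [hUfac, hVfac] at h2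
      have h3 : g * (U' * q i + V' * b i) = g * (U' * q j + V' * b j) := by
        ring_nf; ring_nf at h2; linarith
      exact mul_left_cancel₀ (by linarith) h3
  -- Bezout completion
  have hco : Int.gcd U' V' = 1 := by
    rw [hU', hV', hgdef]
    exact Int.gcd_div_gcd_div_gcd (by rw [hgdef] at hg; exact_mod_cast hg)
  obtain ⟨x, y, hxy⟩ := Int.isCoprime_iff_gcd_eq_one.mpr hco
  refine ⟨!![U', V'; -y, x], ?_, ?_⟩
  · have hdet : (!![U', V'; -y, x]).det = 1 := by
      rw [Matrix.det_fin_two_of]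
      linear_combination hxy
    rw [hdet]; exact isUnit_one
  simp only [Matrix.cons_val', Matrix.cons_val_zero, Matrix.cons_val_one, Matrix.head_cons,
    Matrix.empty_val', Matrix.cons_val_fin_one, Matrix.head_fin_const]
  have Hsum : (U' * q 0 + V' * b 0) + (U' * q 1 + V' * b 1) + (U' * q 2 + V' * b 2)
      = (U' * p 0 + V' * a 0) + (U' * p 1 + V' * a 1) + (U' * p 2 + V' * a 2) := by
    linear_combination U' * hpq.symm + V' * hab.symm
  constructor
  · rcases htwo' with ⟨m, n, hmn, heq⟩ | heq
    · exact Or.inl ⟨m, n, hmn, heq⟩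
    · exact Or.inr ⟨i, j, hij, heq⟩
  · intro r
    rw [Set.mem_Icc]
    have hi0 := hIi' 0; have hi1 := hIi' 1; have hi2 := hIi' 2
    have hj0 := hIj' 0; have hj1 := hIj' 1; have hj2 := hIj' 2
    fin_cases i <;> fin_cases j <;> (try exact absurd rfl hij) <;>
      [ (have HL := outside_lemma (U' * p 0 + V' * a 0) (U' * p 1 + V' * a 1)
          (U' * p 2 + V' * a 2) (U' * q 0 + V' * b 0) (U' * q 1 + V' * b 1)
          (U' * q 2 + V' * b 2) (by linarith) hi0 hi1 hi2 hj0 hj1 hj2;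
         fin_cases r; exacts [HL.1, HL.2.1, HL.2.2]);
        (have HL := outside_lemma (U' * p 0 + V' * a 0) (U' * p 1 + V' * a 1)
          (U' * p 2 + V' * a 2) (U' * q 0 + V' * b 0) (U' * q 2 + V' * b 2)
          (U' * q 1 + V' * b 1) (by linarith) hi0 hi1 hi2 hj0 hj1 hj2;
         fin_cases r; exacts [HL.1, HL.2.2, HL.2.1]);
        (have HL := outside_lemma (U' * p 0 + V' * a 0) (U' * p 1 + V' * a 1)
          (U' * p 2 + V' * a 2) (U' * q 1 + V' * b 1) (U' * q 0 + V' * b 0)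
          (U' * q 2 + V' * b 2) (by linarith) hi0 hi1 hi2 hj0 hj1 hj2;
         fin_cases r; exacts [HL.2.1, HL.1, HL.2.2]);
        (have HL := outside_lemma (U' * p 0 + V' * a 0) (U' * p 1 + V' * a 1)
          (U' * p 2 + V' * a 2) (U' * q 1 + V' * b 1) (U' * q 2 + V' * b 2)
          (U' * q 0 + V' * b 0) (by linarith) hi0 hi1 hi2 hj0 hj1 hj2;
         fin_cases r; exacts [HL.2.2, HL.1, HL.2.1]);
        (have HL := outside_lemma (U' * p 0 + V' * a 0) (U' * p 1 + V' * a 1)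
          (U' * p 2 + V' * a 2) (U' * q 2 + V' * b 2) (U' * q 0 + V' * b 0)
          (U' * q 1 + V' * b 1) (by linarith) hi0 hi1 hi2 hj0 hj1 hj2;
         fin_cases r; exacts [HL.2.1, HL.2.2, HL.1]);
        (have HL := outside_lemma (U' * p 0 + V' * a 0) (U' * p 1 + V' * a 1)
          (U' * p 2 + V' * a 2) (U' * q 2 + V' * b 2) (U' * q 1 + V' * b 1)
          (U' * q 0 + V' * b 0) (by linarith) hi0 hi1 hi2 hj0 hj1 hj2;
         fin_cases r; exacts [HL.2.2, HL.2.1, HL.1])]
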